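/- arXiv:math/9302213 — 2 statements merged into one kernel-verified Lean document; each statement's English description precedes it below -/
import Mathlib

section
/- For each p with 0 < p ≤ 1 there exists a constant C > 0 such that the following holds for all sufficiently large integers n and all integers K ≥ 1: let T : ℝ^n → ℝ^K and P : ℝ^K → ℝ^n be linear maps with P ∘ T = Id, and suppose ‖T(x)‖_∞ ≤ ‖x‖_p for all x ∈ ℝ^n, where ‖x‖_p = (∑_{i=1}^n |x_i|^p)^{1/p} and ‖·‖_∞ is the supremum norm on ℝ^K. Then there exists w ∈ ℝ^K with ‖w‖_∞ ≤ 1 and ‖P(w)‖_p ≥ C · n^{1/p − 1/2} · (log n)^{-1/2}. -/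
private lemma aux_rpow_add_le {p : ℝ} (hp0 : 0 ≤ p) (hp1 : p ≤ 1) {x y : ℝ}
    (hx : 0 ≤ x) (hy : 0 ≤ y) : (x + y) ^ p ≤ x ^ p + y ^ p := by
  have h := NNReal.rpow_add_le_add_rpow x.toNNReal y.toNNReal hp0 hp1
  have h2 := NNReal.coe_le_coe.mpr h
  push_cast [NNReal.coe_rpow, Real.coe_toNNReal x hx, Real.coe_toNNReal y hy] at h2
  exact h2

private lemma aux_abs_add_rpow {p : ℝ} (hp0 : 0 < p) (hp1 : p ≤ 1) (x y : ℝ) :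
    |x + y| ^ p ≤ |x| ^ p + |y| ^ p :=
  le_trans (Real.rpow_le_rpow (abs_nonneg _) (abs_add_le x y) hp0.le)
    (aux_rpow_add_le hp0.le hp1 (abs_nonneg x) (abs_nonneg y))

private lemma aux_sum_rpow_le {p : ℝ} (hp0 : 0 < p) (hp1 : p ≤ 1) {ι : Type*} [Fintype ι]
    [Nonempty ι] (f : ι → ℝ) (hf : ∀ i, 0 ≤ f i) :
    ∑ i, f i ^ p ≤ (Fintype.card ι : ℝ) ^ (1 - p) * (∑ i, f i) ^ p := by
  have hN0 : (0:ℝ) < (Fintype.card ι : ℝ) := by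
    exact_mod_cast Fintype.card_pos (α := ι)
  set N : ℝ := (Fintype.card ι : ℝ) with hN
  have hw : ∀ i ∈ (Finset.univ : Finset ι), (0:ℝ) ≤ N⁻¹ := fun _ _ => inv_nonneg.mpr hN0.le
  have hw' : ∑ _i : ι, N⁻¹ = 1 := by
    rw [Finset.sum_const, Finset.card_univ, nsmul_eq_mul]
    rw [hN] at hN0 ⊢
    exact mul_inv_cancel₀ hN0.ne'
  have hq : (1:ℝ) ≤ 1 / p := by rw [le_div_iff₀ hp0]; linarith
  have key := Real.rpow_arith_mean_le_arith_mean_rpow Finset.univ (fun _ => N⁻¹)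
    (fun i => f i ^ p) hw hw' (fun i _ => Real.rpow_nonneg (hf i) p) hq
  have hfp : ∀ i ∈ Finset.univ, N⁻¹ * (f i ^ p) ^ (1 / p) = N⁻¹ * f i := by
    intro i _
    rw [← Real.rpow_mul (hf i), mul_one_div, div_self hp0.ne', Real.rpow_one]
  rw [Finset.sum_congr rfl hfp] at key
  have hX : (0:ℝ) ≤ ∑ i, N⁻¹ * f i ^ p :=
    Finset.sum_nonneg fun i _ => mul_nonneg (inv_nonneg.mpr hN0.le) (Real.rpow_nonneg (hf i) p)
  have h2 : ∑ i, N⁻¹ * f i ^ p ≤ (∑ i, N⁻¹ * f i) ^ p := by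
    have h := Real.rpow_le_rpow (Real.rpow_nonneg hX (1/p)) key hp0.le
    rwa [← Real.rpow_mul hX, one_div_mul_cancel hp0.ne', Real.rpow_one] at h
  rw [← Finset.mul_sum, ← Finset.mul_sum] at h2
  have hfs : (0:ℝ) ≤ ∑ i, f i := Finset.sum_nonneg fun i _ => hf i
  rw [Real.mul_rpow (inv_nonneg.mpr hN0.le) hfs] at h2
  have h3 := mul_le_mul_of_nonneg_left h2 hN0.le
  rw [← mul_assoc, mul_inv_cancel₀ hN0.ne', one_mul, ← mul_assoc] at h3
  calc ∑ i, f i ^ p ≤ N * N⁻¹ ^ p * (∑ i, f i) ^ p := h3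
    _ = N ^ (1 - p) * (∑ i, f i) ^ p := by
        rw [Real.inv_rpow hN0.le, Real.rpow_sub hN0, Real.rpow_one, div_eq_mul_inv]

private lemma aux_pospart_le {s : ℝ} (hs : 0 < s) (u : ℝ) : max 0 u ≤ Real.exp (s * u) / s := by
  rcases le_or_gt u 0 with h | h
  · rw [max_eq_left h]; positivity
  · rw [max_eq_right h.le, le_div_iff₀ hs, mul_comm]
    exact le_trans (by linarith [Real.add_one_le_exp (s*u)]) (le_refl (Real.exp (s*u)))

private lemma aux_abs_excess_le {s lam : ℝ} (hs : 0 < s) (y : ℝ) :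
    max 0 (|y| - lam) ≤ Real.exp (s * (y - lam)) / s + Real.exp (s * (-y - lam)) / s := by
  rcases abs_cases y with ⟨h, _⟩ | ⟨h, _⟩
  · rw [h]
    refine le_trans (aux_pospart_le hs (y - lam)) ?_
    have : (0:ℝ) ≤ Real.exp (s * (-y - lam)) / s := by positivity
    linarith
  · rw [h]
    refine le_trans (aux_pospart_le hs (-y - lam)) ?_
    have : (0:ℝ) ≤ Real.exp (s * (y - lam)) / s := by positivity
    linarith

private lemma aux_mgf (n : ℕ) (t : Fin n → ℝ) (ht : ∀ k, |t k| ≤ 1) (s : ℝ) :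
    ∑ ε : Fin n → Bool, Real.exp (s * ∑ k, (if ε k then (1:ℝ) else -1) * t k)
      ≤ (2:ℝ) ^ n * Real.exp (s ^ 2 * n / 2) := by
  have hrw : ∀ ε : Fin n → Bool,
      Real.exp (s * ∑ k, (if ε k then (1:ℝ) else -1) * t k)
        = ∏ k, Real.exp (s * ((if ε k then (1:ℝ) else -1) * t k)) := by
    intro ε
    rw [← Real.exp_sum, Finset.mul_sum]
  simp only [hrw]
  have hps := Finset.prod_univ_sum (fun _ : Fin n => (Finset.univ : Finset Bool))
    (fun k b => Real.exp (s * ((if b then (1:ℝ) else -1) * t k)))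
  rw [Fintype.piFinset_univ] at hps
  rw [← hps]
  have hbool : ∀ k : Fin n, (∑ b : Bool, Real.exp (s * ((if b then (1:ℝ) else -1) * t k)))
      = Real.exp (s * t k) + Real.exp (s * (-1 * t k)) := by
    intro k
    rw [Fintype.sum_bool]
    norm_num
  rw [Finset.prod_congr rfl (fun k _ => hbool k)]
  have hcosh : ∀ k, Real.exp (s * t k) + Real.exp (s * (-1 * t k))
      ≤ 2 * Real.exp (s ^ 2 / 2) := by
    intro k
    have h1 : Real.exp (s * t k) + Real.exp (s * (-1 * t k)) = 2 * Real.cosh (s * t k) := by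
      rw [show s * (-1 * t k) = -(s * t k) by ring, Real.cosh_eq]; ring
    rw [h1]
    have h2 : Real.cosh (s * t k) ≤ Real.exp ((s * t k) ^ 2 / 2) := Real.cosh_le_exp_half_sq _
    have h3 : Real.exp ((s * t k) ^ 2 / 2) ≤ Real.exp (s ^ 2 / 2) := by
      apply Real.exp_le_exp.mpr
      have ht2 : t k ^ 2 ≤ 1 := by nlinarith [sq_abs (t k), abs_nonneg (t k), ht k]
      nlinarith [sq_nonneg s]
    linarith
  calc ∏ k, (Real.exp (s * t k) + Real.exp (s * (-1 * t k)))
      ≤ ∏ _k : Fin n, (2 * Real.exp (s ^ 2 / 2)) := by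
        apply Finset.prod_le_prod
        · intro k _; positivity
        · intro k _; exact hcosh k
    _ = (2:ℝ) ^ n * Real.exp (s ^ 2 * n / 2) := by
        rw [Finset.prod_const, Finset.card_univ, Fintype.card_fin, mul_pow, ← Real.exp_nat_mul]
        ring_nf

private lemma aux_sqrt_le {p : ℝ} (hp0 : 0 < p) (hp1 : p ≤ 1) :
    Real.sqrt (p/2) ≤ Real.sqrt (2/p) := by
  apply Real.sqrt_le_sqrt
  rw [div_le_div_iff₀ (by norm_num) hp0]
  nlinarith

private lemma aux_sqrt_mul {p : ℝ} (hp0 : 0 < p) :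
    Real.sqrt (p/2) * Real.sqrt (2/p) = 1 := by
  rw [← Real.sqrt_mul (by positivity)]
  rw [show p/2 * (2/p) = 1 by field_simp]
  exact Real.sqrt_one

set_option maxHeartbeats 1000000 in
/-- Corollary 2: for `0 < p ≤ 1` there is `C > 0` (depending only on `p`) such that for
all sufficiently large `n` and all `K ≥ 1`, if `P ∘ T = Id` is a factorization of the
identity on `ℓ^n_p` through `ℓ^K_∞` with `‖T x‖_∞ ≤ ‖x‖_p` for all `x`, then there is
`w` with `‖w‖_∞ ≤ 1` and `‖P w‖_p ≥ C n^{1/p - 1/2} (log n)^{-1/2}`. -/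
theorem lower_bound_for_P_norm (p : ℝ) (hp0 : 0 < p) (hp1 : p ≤ 1) :
    ∃ C : ℝ, 0 < C ∧ ∃ n₀ : ℕ, ∀ n : ℕ, n₀ ≤ n → ∀ K : ℕ, 1 ≤ K →
      ∀ (T : (Fin n → ℝ) →ₗ[ℝ] (Fin K → ℝ)) (P : (Fin K → ℝ) →ₗ[ℝ] (Fin n → ℝ)),
        P ∘ₗ T = LinearMap.id →
          (∀ x : Fin n → ℝ, ‖T x‖ ≤ (∑ i, |x i| ^ p) ^ (1 / p)) →
            ∃ w : Fin K → ℝ, ‖w‖ ≤ 1 ∧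
              C * (n : ℝ) ^ (1 / p - 1 / 2) / Real.sqrt (Real.log n) ≤
                (∑ i, |P w i| ^ p) ^ (1 / p) := by
  refine ⟨Real.sqrt (p/2) / (2 * (2:ℝ) ^ ((1:ℝ)/p)), by positivity, 3, ?_⟩
  intro n hn K _hK T P hPT hT
  -- basic positivity facts
  set nR : ℝ := (n : ℝ) with hnR
  have hn3 : (3:ℝ) ≤ nR := by rw [hnR]; exact_mod_cast hn
  have hn0 : (0:ℝ) < nR := by linarith
  have hnn : 0 < n := by omega
  have hlog1 : (1:ℝ) ≤ Real.log nR := by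
    rw [Real.le_log_iff_exp_le hn0]
    calc Real.exp 1 ≤ 2.7182818286 := Real.exp_one_lt_d9.le
      _ ≤ (3:ℝ) := by norm_num
      _ ≤ nR := hn3
  have hlog0 : (0:ℝ) < Real.log nR := by linarith
  set lam : ℝ := Real.sqrt (2 / p * (nR * Real.log nR)) with hlamdef
  have hlam0 : 0 < lam := Real.sqrt_pos.mpr (by positivity)
  have hlam2 : lam ^ 2 = 2 / p * (nR * Real.log nR) := Real.sq_sqrt (by positivity)
  set s : ℝ := lam / nR with hsdef
  have hs0 : 0 < s := by positivity
  set δ : ℝ := 2 * nR / lam * nR ^ (-(1:ℝ)/p) with hδdef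
  have hδ0 : 0 < δ := by
    have := Real.rpow_pos_of_pos hn0 (-(1:ℝ)/p)
    positivity
  -- basis vectors and matrix entries
  set e : Fin n → (Fin n → ℝ) := fun k => (fun j => if k = j then (1:ℝ) else 0) with hedef
  set eK : Fin K → (Fin K → ℝ) := fun j => (fun j' => if j = j' then (1:ℝ) else 0) with heKdef
  set A : Fin n → Fin K → ℝ := fun i j => P (eK j) i with hAdef
  -- T entry bounds
  have hTe1 : ∀ k, ‖T (e k)‖ ≤ 1 := by
    intro k
    have h := hT (e k)
    have hsum : (∑ i, |e k i| ^ p) = 1 := by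
      have h1 : ∀ i, |e k i| ^ p = if k = i then (1:ℝ) else 0 := by
        intro i
        by_cases hki : k = i
        · simp [hedef, hki, Real.one_rpow]
        · simp [hedef, hki, Real.zero_rpow hp0.ne']
      simp [h1]
    rwa [hsum, Real.one_rpow] at h
  have hu : ∀ k j, |T (e k) j| ≤ 1 := by
    intro k j
    have := norm_le_pi_norm (T (e k)) j
    rw [Real.norm_eq_abs] at this
    exact this.trans (hTe1 k)
  -- sign vectors
  set σ : (Fin n → Bool) → (Fin n → ℝ) := fun ε => (fun i => if ε i then (1:ℝ) else -1)
    with hσdef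
  have hTσ : ∀ ε j, T (σ ε) j = ∑ k, (if ε k then (1:ℝ) else -1) * T (e k) j := by
    intro ε j
    conv_lhs => rw [show σ ε = ∑ k, σ ε k • e k from pi_eq_sum_univ (σ ε)]
    rw [map_sum, Finset.sum_apply]
    simp only [map_smul, Pi.smul_apply, smul_eq_mul]
    rfl
  have hPapp : ∀ (v : Fin K → ℝ) i, P v i = ∑ j, v j * A i j := by
    intro v i
    conv_lhs => rw [show v = ∑ j, v j • eK j from pi_eq_sum_univ v]
    rw [map_sum, Finset.sum_apply]
    simp only [map_smul, Pi.smul_apply, smul_eq_mul, hAdef]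
  have hPT' : ∀ x, P (T x) = x := by
    intro x
    have := LinearMap.congr_fun hPT x
    simpa using this
  -- truncation
  set wv : (Fin n → Bool) → (Fin K → ℝ) :=
    fun ε => (fun j => max (-1) (min 1 (T (σ ε) j / lam))) with hwvdef
  set ev : (Fin n → Bool) → (Fin K → ℝ) :=
    fun ε => (fun j => T (σ ε) j - lam * wv ε j) with hevdef
  have hw1 : ∀ ε j, |wv ε j| ≤ 1 := by
    intro ε j
    rw [abs_le]
    exact ⟨le_max_left _ _, max_le (by norm_num) (min_le_left _ _)⟩
  have hexcb : ∀ ε j, |ev ε j| ≤ max 0 (|T (σ ε) j| - lam) := by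
    intro ε j
    set a := T (σ ε) j with ha
    have hev : ev ε j = a - lam * max (-1) (min 1 (a / lam)) := rfl
    rcases le_or_gt (a / lam) (-1) with h | h
    · have h1 : min 1 (a / lam) = a / lam := min_eq_right (by linarith)
      have h2 : max (-1) (a / lam) = -1 := max_eq_left h
      have ha' : a ≤ -lam := by
        have := (div_le_iff₀ hlam0).mp h
        linarith
      rw [hev, h1, h2]
      have : |a - lam * (-1)| = -a - lam := by
        rw [abs_of_nonpos (by linarith)]; ring
      rw [this]
      have : |a| = -a := abs_of_nonpos (by linarith)
      refine le_trans (le_of_eq (by linarith)) (le_max_right _ _)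
    · rcases le_or_gt 1 (a / lam) with h2 | h2
      · have h1 : min 1 (a / lam) = 1 := min_eq_left h2
        have h3 : max (-1:ℝ) 1 = 1 := by norm_num
        have ha' : lam ≤ a := by
          have := (le_div_iff₀ hlam0).mp h2
          linarith
        rw [hev, h1, h3]
        have : |a - lam * 1| = a - lam := by rw [abs_of_nonneg (by linarith)]; ring
        rw [this]
        have : |a| = a := abs_of_nonneg (by linarith)
        refine le_trans (le_of_eq (by linarith)) (le_max_right _ _)
      · have h1 : min 1 (a / lam) = a / lam := min_eq_right h2.le
        have h3 : max (-1) (a / lam) = a / lam := max_eq_right h.le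
        rw [hev, h1, h3]
        have : a - lam * (a / lam) = 0 := by field_simp; ring
        rw [this, abs_zero]
        exact le_max_left _ _
  -- decomposition identity
  have hdec : ∀ ε i, σ ε i = lam * P (wv ε) i + P (ev ε) i := by
    intro ε i
    have h1 : T (σ ε) = lam • wv ε + ev ε := by
      funext j
      simp only [hevdef, Pi.add_apply, Pi.smul_apply, smul_eq_mul]
      ring
    have h2 : P (T (σ ε)) = σ ε := hPT' _
    rw [h1, map_add, map_smul] at h2
    have := congrFun h2 i
    simp only [Pi.add_apply, Pi.smul_apply, smul_eq_mul] at this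
    linarith [this]
  -- pointwise lower bound
  have hpt : ∀ ε, nR ≤ lam ^ p * (∑ i, |P (wv ε) i| ^ p) + ∑ i, |P (ev ε) i| ^ p := by
    intro ε
    have hone : ∀ i : Fin n, (1:ℝ) ≤ lam ^ p * |P (wv ε) i| ^ p + |P (ev ε) i| ^ p := by
      intro i
      have h := aux_abs_add_rpow hp0 hp1 (lam * P (wv ε) i) (P (ev ε) i)
      rw [← hdec ε i] at h
      have hσ1 : |σ ε i| = 1 := by
        by_cases hb : ε i <;> simp [hσdef, hb]
      rw [hσ1, Real.one_rpow] at h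
      rwa [abs_mul, abs_of_nonneg hlam0.le, Real.mul_rpow hlam0.le (abs_nonneg _)] at h
    calc nR = ∑ _i : Fin n, (1:ℝ) := by simp [hnR]
      _ ≤ ∑ i, (lam ^ p * |P (wv ε) i| ^ p + |P (ev ε) i| ^ p) :=
          Finset.sum_le_sum (fun i _ => hone i)
      _ = lam ^ p * (∑ i, |P (wv ε) i| ^ p) + ∑ i, |P (ev ε) i| ^ p := by
          rw [Finset.sum_add_distrib, Finset.mul_sum]
  -- sum over sign patterns
  set N : ℝ := (2:ℝ) ^ n with hNdef
  have hN0 : (0:ℝ) < N := by positivity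
  have hcard : (Fintype.card (Fin n → Bool) : ℝ) = N := by
    rw [Fintype.card_fun]; push_cast; norm_num; exact hNdef.symm
  set S : ℝ := ∑ ε : Fin n → Bool, ∑ i, |P (wv ε) i| ^ p with hSdef
  set E : ℝ := ∑ ε : Fin n → Bool, ∑ i, |P (ev ε) i| ^ p with hEdef
  have hS0 : 0 ≤ S := Finset.sum_nonneg fun ε _ => Finset.sum_nonneg fun i _ =>
    Real.rpow_nonneg (abs_nonneg _) p
  have hmain : N * nR ≤ lam ^ p * S + E := by
    have h : ∑ _ε : Fin n → Bool, nR ≤ ∑ ε : Fin n → Bool,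
        (lam ^ p * (∑ i, |P (wv ε) i| ^ p) + ∑ i, |P (ev ε) i| ^ p) :=
      Finset.sum_le_sum (fun ε _ => hpt ε)
    rw [Finset.sum_const, Finset.card_univ, nsmul_eq_mul, hcard] at h
    rw [Finset.sum_add_distrib, ← Finset.mul_sum] at h
    rw [← hSdef, ← hEdef] at h
    exact h
  -- row sums of P and their maximum
  set R : Fin n → ℝ := fun i => ∑ j, |A i j| with hRdef
  obtain ⟨i₀, -, hi₀⟩ := Finset.exists_max_image (Finset.univ : Finset (Fin n)) R
    ⟨⟨0, hnn⟩, Finset.mem_univ _⟩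
  set B : ℝ := R i₀ with hBdef
  have hB0 : (0:ℝ) ≤ B := Finset.sum_nonneg fun j _ => abs_nonneg _
  have hRB : ∀ i, R i ≤ B := fun i => hi₀ i (Finset.mem_univ i)
  -- the key exponential computation
  have hδeq : 2 / s * Real.exp (-(s*lam) + s^2 * nR / 2) = δ := by
    have h1 : -(s*lam) + s^2 * nR / 2 = -(lam^2) / (2*nR) := by
      rw [hsdef]
      field_simp
      ring
    have h2 : -(lam^2) / (2*nR) = Real.log nR * (-1/p) := by
      rw [hlam2]
      field_simp
    rw [h1, h2, ← Real.rpow_def_of_pos hn0, hδdef, hsdef]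
    field_simp
  -- expected excess per coordinate
  have hexcsum : ∀ j : Fin K, ∑ ε : Fin n → Bool, |ev ε j| ≤ N * δ := by
    intro j
    have h1 : ∀ ε : Fin n → Bool, |ev ε j| ≤
        Real.exp (s * (T (σ ε) j - lam)) / s + Real.exp (s * (-(T (σ ε) j) - lam)) / s :=
      fun ε => le_trans (hexcb ε j) (aux_abs_excess_le hs0 (T (σ ε) j))
    have h2 : ∑ ε : Fin n → Bool, Real.exp (s * (T (σ ε) j - lam))
        ≤ Real.exp (-(s*lam)) * (N * Real.exp (s^2 * nR / 2)) := by
      have hform : ∀ ε : Fin n → Bool, Real.exp (s * (T (σ ε) j - lam))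
          = Real.exp (-(s*lam)) *
            Real.exp (s * ∑ k, (if ε k then (1:ℝ) else -1) * T (e k) j) := by
        intro ε
        rw [← Real.exp_add, ← hTσ ε j]
        congr 1; ring
      rw [Finset.sum_congr rfl (fun ε _ => hform ε), ← Finset.mul_sum]
      have hm := aux_mgf n (fun k => T (e k) j) (fun k => hu k j) s
      exact mul_le_mul_of_nonneg_left hm (Real.exp_nonneg _)
    have h3 : ∑ ε : Fin n → Bool, Real.exp (s * (-(T (σ ε) j) - lam))
        ≤ Real.exp (-(s*lam)) * (N * Real.exp (s^2 * nR / 2)) := by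
      have hform : ∀ ε : Fin n → Bool, Real.exp (s * (-(T (σ ε) j) - lam))
          = Real.exp (-(s*lam)) *
            Real.exp ((-s) * ∑ k, (if ε k then (1:ℝ) else -1) * T (e k) j) := by
        intro ε
        rw [← Real.exp_add, ← hTσ ε j]
        congr 1; ring
      rw [Finset.sum_congr rfl (fun ε _ => hform ε), ← Finset.mul_sum]
      have hm := aux_mgf n (fun k => T (e k) j) (fun k => hu k j) (-s)
      rw [neg_sq] at hm
      exact mul_le_mul_of_nonneg_left hm (Real.exp_nonneg _)
    calc ∑ ε : Fin n → Bool, |ev ε j|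
        ≤ ∑ ε : Fin n → Bool, (Real.exp (s * (T (σ ε) j - lam)) / s
            + Real.exp (s * (-(T (σ ε) j) - lam)) / s) :=
          Finset.sum_le_sum (fun ε _ => h1 ε)
      _ = (∑ ε : Fin n → Bool, Real.exp (s * (T (σ ε) j - lam))) / s
            + (∑ ε : Fin n → Bool, Real.exp (s * (-(T (σ ε) j) - lam))) / s := by
          rw [Finset.sum_add_distrib, Finset.sum_div, Finset.sum_div]
      _ ≤ (Real.exp (-(s*lam)) * (N * Real.exp (s^2 * nR / 2))) / s
            + (Real.exp (-(s*lam)) * (N * Real.exp (s^2 * nR / 2))) / s := by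
          gcongr
      _ = N * (2 / s * Real.exp (-(s*lam) + s^2 * nR / 2)) := by
          rw [Real.exp_add]; ring
      _ = N * δ := by rw [hδeq]
  -- total error bound
  have herr : E ≤ N * nR * (B * δ) ^ p := by
    have hi : ∀ i : Fin n, ∑ ε : Fin n → Bool, |P (ev ε) i| ^ p ≤ N * (B * δ) ^ p := by
      intro i
      have hJ := aux_sum_rpow_le hp0 hp1 (fun ε : Fin n → Bool => |P (ev ε) i|)
        (fun ε => abs_nonneg _)
      have hin : ∑ ε : Fin n → Bool, |P (ev ε) i| ≤ B * (N * δ) := by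
        have hptw : ∀ ε, |P (ev ε) i| ≤ ∑ j, |A i j| * |ev ε j| := by
          intro ε
          rw [hPapp (ev ε) i]
          refine le_trans (Finset.abs_sum_le_sum_abs _ _) ?_
          refine Finset.sum_le_sum fun j _ => ?_
          rw [abs_mul, mul_comm]
        refine le_trans (Finset.sum_le_sum fun ε _ => hptw ε) ?_
        rw [Finset.sum_comm]
        have hj : ∀ j ∈ (Finset.univ : Finset (Fin K)),
            ∑ ε : Fin n → Bool, |A i j| * |ev ε j| ≤ |A i j| * (N * δ) := by
          intro j _
          rw [← Finset.mul_sum]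
          exact mul_le_mul_of_nonneg_left (hexcsum j) (abs_nonneg _)
        refine le_trans (Finset.sum_le_sum hj) ?_
        rw [← Finset.sum_mul]
        exact mul_le_mul_of_nonneg_right (hRB i) (by positivity)
      calc ∑ ε : Fin n → Bool, |P (ev ε) i| ^ p
          ≤ (Fintype.card (Fin n → Bool) : ℝ) ^ (1-p)
              * (∑ ε : Fin n → Bool, |P (ev ε) i|) ^ p := hJ
        _ ≤ N ^ (1-p) * (B * (N * δ)) ^ p := by
            rw [hcard]
            gcongr
        _ = N * (B * δ) ^ p := by
            rw [show B * (N * δ) = B * δ * N by ring,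
              Real.mul_rpow (mul_nonneg hB0 hδ0.le) hN0.le, ← mul_assoc,
              mul_comm (N ^ (1-p)) ((B*δ) ^ p), mul_assoc, ← Real.rpow_add hN0,
              sub_add_cancel, Real.rpow_one, mul_comm]
    have hswap : E = ∑ i : Fin n, ∑ ε : Fin n → Bool, |P (ev ε) i| ^ p := by
      rw [hEdef, Finset.sum_comm]
    rw [hswap]
    calc ∑ i : Fin n, ∑ ε : Fin n → Bool, |P (ev ε) i| ^ p
        ≤ ∑ _i : Fin n, N * (B * δ) ^ p := Finset.sum_le_sum fun i _ => hi i
      _ = N * nR * (B * δ) ^ p := by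
          rw [Finset.sum_const, Finset.card_univ, Fintype.card_fin, nsmul_eq_mul]
          rw [← hnR]; ring
  -- abbreviations for the endgame
  set a : ℝ := nR ^ ((1:ℝ)/p) with hadef
  set b : ℝ := (2:ℝ) ^ ((1:ℝ)/p) with hbdef
  set d : ℝ := Real.sqrt (2/p) with hddef
  set sq : ℝ := Real.sqrt nR with hsqdef
  set L : ℝ := Real.sqrt (Real.log nR) with hLdef
  have ha0 : 0 < a := Real.rpow_pos_of_pos hn0 _
  have hb0 : (0:ℝ) < b := Real.rpow_pos_of_pos (by norm_num) _
  have hd0 : 0 < d := Real.sqrt_pos.mpr (by positivity)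
  have hsq0 : 0 < sq := Real.sqrt_pos.mpr hn0
  have hL1 : 1 ≤ L := by
    have := Real.sqrt_le_sqrt hlog1
    rwa [Real.sqrt_one] at this
  have hL0 : 0 < L := lt_of_lt_of_le one_pos hL1
  have hlamfac : lam = d * (sq * L) := by
    rw [hlamdef, Real.sqrt_mul (by positivity) (nR * Real.log nR), Real.sqrt_mul hn0.le]
  have hnR2 : nR = sq * sq := (Real.mul_self_sqrt hn0.le).symm
  have hpow : nR ^ (1/p - 1/2 : ℝ) = a / sq := by
    rw [Real.rpow_sub hn0]
    congr 1
    rw [hsqdef, Real.sqrt_eq_rpow]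
  have ha' : nR ^ ((-1:ℝ)/p) = a⁻¹ := by
    rw [show ((-1:ℝ)/p) = -((1:ℝ)/p) by ring, Real.rpow_neg hn0.le]
  have hsqple : Real.sqrt (p/2) ≤ d := aux_sqrt_le hp0 hp1
  have hCd : Real.sqrt (p/2) * d = 1 := aux_sqrt_mul hp0
  -- case analysis
  rcases le_or_gt (1/2 : ℝ) ((B * δ) ^ p) with hcase | hcase
  · -- Case A: some row of P has large ℓ¹ norm
    have hBδ1 : (1/2 : ℝ) ^ ((1:ℝ)/p) ≤ B * δ := by
      have h := Real.rpow_le_rpow (by norm_num) hcase (by positivity : (0:ℝ) ≤ (1:ℝ)/p)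
      rwa [← Real.rpow_mul (by positivity : (0:ℝ) ≤ B * δ), mul_one_div, div_self hp0.ne',
        Real.rpow_one] at h
    have hBlower : (1/2 : ℝ) ^ ((1:ℝ)/p) / δ ≤ B := (div_le_iff₀ hδ0).mpr hBδ1
    refine ⟨fun j => if 0 ≤ A i₀ j then (1:ℝ) else -1, ?_, ?_⟩
    · rw [pi_norm_le_iff_of_nonneg zero_le_one]
      intro j
      rw [Real.norm_eq_abs]
      by_cases h : 0 ≤ A i₀ j <;> simp [h]
    · have hPw : P (fun j => if 0 ≤ A i₀ j then (1:ℝ) else -1) i₀ = B := by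
        rw [hPapp, hBdef, hRdef]
        refine Finset.sum_congr rfl fun j _ => ?_
        by_cases h : 0 ≤ A i₀ j
        · simp [h, abs_of_nonneg h]
        · push_neg at h
          simp [not_le.mpr h, abs_of_neg h]
      have hsum_ge : B ^ p ≤ ∑ i, |P (fun j => if 0 ≤ A i₀ j then (1:ℝ) else -1) i| ^ p := by
        have h := Finset.single_le_sum
          (f := fun i => |P (fun j => if 0 ≤ A i₀ j then (1:ℝ) else -1) i| ^ p)
          (fun i _ => Real.rpow_nonneg (abs_nonneg _) p) (Finset.mem_univ i₀)
        rwa [hPw, abs_of_nonneg hB0] at h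
      have hfin : B ≤ (∑ i, |P (fun j => if 0 ≤ A i₀ j then (1:ℝ) else -1) i| ^ p) ^ (1/p) := by
        have h := Real.rpow_le_rpow (Real.rpow_nonneg hB0 p) hsum_ge
          (by positivity : (0:ℝ) ≤ 1/p)
        rwa [← Real.rpow_mul hB0, mul_one_div, div_self hp0.ne', Real.rpow_one] at h
      have hval : (1/2 : ℝ) ^ ((1:ℝ)/p) / δ = d * L * (a / (2 * b * sq)) := by
        rw [show ((1:ℝ)/2) = (2:ℝ)⁻¹ by norm_num, Real.inv_rpow (by norm_num : (0:ℝ) ≤ 2)]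
        rw [hδdef, ha', hlamfac]
        rw [show (2:ℝ) * nR = 2 * (sq * sq) by rw [← hnR2]]
        rw [← hbdef]
        field_simp
      have hstep : Real.sqrt (p/2) / L ≤ d * L := by
        calc Real.sqrt (p/2) / L ≤ Real.sqrt (p/2) := by
              apply div_le_self (Real.sqrt_nonneg _) hL1
          _ ≤ d := hsqple
          _ ≤ d * L := le_mul_of_one_le_right hd0.le hL1
      calc Real.sqrt (p/2) / (2 * b) * nR ^ (1/p - 1/2 : ℝ) / L
          = (Real.sqrt (p/2) / L) * (a / (2 * b * sq)) := by
            rw [hpow]; field_simp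
        _ ≤ (d * L) * (a / (2 * b * sq)) := by
            apply mul_le_mul_of_nonneg_right hstep (by positivity)
        _ = (1/2 : ℝ) ^ ((1:ℝ)/p) / δ := hval.symm
        _ ≤ B := hBlower
        _ ≤ _ := hfin
  · -- Case B: the average of ‖P w_ε‖ₚᵖ is large
    have hlamp0 : (0:ℝ) < lam ^ p := Real.rpow_pos_of_pos hlam0 p
    have herr2 : E ≤ N * nR * (1/2) := by
      calc E ≤ N * nR * (B * δ) ^ p := herr
        _ ≤ N * nR * (1/2) := by
            apply mul_le_mul_of_nonneg_left hcase.le (by positivity)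
    have hS2 : N * (nR / (2 * lam ^ p)) ≤ S := by
      have h1 : N * nR / 2 ≤ lam ^ p * S := by linarith
      rw [← mul_le_mul_iff_of_pos_right hlamp0]
      calc N * (nR / (2 * lam ^ p)) * lam ^ p = N * nR / 2 := by field_simp
        _ ≤ lam ^ p * S := h1
        _ = S * lam ^ p := by ring
    obtain ⟨ε, -, hε⟩ : ∃ ε ∈ (Finset.univ : Finset (Fin n → Bool)),
        nR / (2 * lam ^ p) ≤ ∑ i, |P (wv ε) i| ^ p := by
      apply Finset.exists_le_of_sum_le Finset.univ_nonempty
      rw [Finset.sum_const, Finset.card_univ, nsmul_eq_mul, hcard]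
      exact le_trans (le_of_eq rfl) (hS2.trans (le_of_eq hSdef))
    refine ⟨wv ε, ?_, ?_⟩
    · rw [pi_norm_le_iff_of_nonneg zero_le_one]
      intro j
      rw [Real.norm_eq_abs]
      exact hw1 ε j
    · have hc0 : (0:ℝ) ≤ nR / (2 * lam ^ p) := by positivity
      have hfin : (nR / (2 * lam ^ p)) ^ ((1:ℝ)/p) ≤ (∑ i, |P (wv ε) i| ^ p) ^ (1/p) :=
        Real.rpow_le_rpow hc0 hε (by positivity)
      have hcval : (nR / (2 * lam ^ p)) ^ ((1:ℝ)/p) = a / (b * lam) := by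
        rw [Real.div_rpow hn0.le (by positivity), Real.mul_rpow (by norm_num) hlamp0.le,
          ← Real.rpow_mul hlam0.le, mul_one_div, div_self hp0.ne', Real.rpow_one, ← hbdef]
      have hsqp2 : Real.sqrt (p/2) = d⁻¹ :=
        eq_inv_of_mul_eq_one_right (by rw [mul_comm]; exact hCd)
      have htgt : Real.sqrt (p/2) / (2 * b) * nR ^ (1/p - 1/2 : ℝ) / L
          = (1/2) * (a / (b * lam)) := by
        rw [hpow, hsqp2, hlamfac]
        field_simp
      calc Real.sqrt (p/2) / (2 * b) * nR ^ (1/p - 1/2 : ℝ) / L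
          = (1/2) * (a / (b * lam)) := htgt
        _ ≤ a / (b * lam) := by
            have : (0:ℝ) ≤ a / (b * lam) := by positivity
            linarith
        _ = (nR / (2 * lam ^ p)) ^ ((1:ℝ)/p) := hcval.symm
        _ ≤ _ := hfin
end

section
/- Let 0 < p < 1 and let n ≥ 1 be an integer. Set K = 2^n, index the coordinates of ℝ^K by sign vectors s ∈ {-1,1}^n, and define linear maps T : ℝ^n → ℝ^K by (T x)_s = ∑_{i=1}^n x_i s_i and P : ℝ^K → ℝ^n by (P w)_i = 2^{-n} ∑_{s ∈ {-1,1}^n} w_s s_i. Then P ∘ T = Id on ℝ^n, ‖T x‖_∞ ≤ ‖x‖_p for all x ∈ ℝ^n, and ‖P w‖_p ≤ n^{1/p − 1/2} · ‖w‖_∞ for all w ∈ ℝ^K. -/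
open Finset

private lemma rad_orth (n : ℕ) (i j : Fin n) :
    ∑ s : Fin n → Bool, (if s i then (1:ℝ) else -1) * (if s j then (1:ℝ) else -1)
      = if i = j then (2:ℝ)^n else 0 := by
  rcases eq_or_ne i j with rfl | hij
  · rw [if_pos rfl]
    have h1 : ∀ s : Fin n → Bool,
        (if s i then (1:ℝ) else -1) * (if s i then (1:ℝ) else -1) = 1 := fun s => by
      cases h : s i <;> simp [h]
    rw [Finset.sum_congr rfl (fun s _ => h1 s), Finset.sum_const, Finset.card_univ]
    simp [Fintype.card_fun]
  · rw [if_neg hij]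
    apply Finset.sum_ninvolution (fun s => Function.update s i (!s i))
    · intro s
      have h1 : Function.update s i (!s i) i = !s i := Function.update_self i (!s i) s
      have h2 : Function.update s i (!s i) j = s j := Function.update_of_ne (Ne.symm hij) _ s
      rw [h1, h2]
      cases s i <;> cases s j <;> norm_num
    · intro s _ hcontra
      have := congrFun hcontra i
      rw [Function.update_self] at this
      cases h : s i <;> rw [h] at this <;> simp at this
    · intro s; exact Finset.mem_univ _
    · intro s
      funext k
      rcases eq_or_ne k i with rfl | hk
      · simp [Function.update_self]
      · simp [Function.update_of_ne hk]

lemma l1_le_lp {ι : Type*} (s : Finset ι) (f : ι → ℝ) (hf : ∀ i ∈ s, 0 ≤ f i)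
    {p : ℝ} (hp0 : 0 < p) (hp1 : p ≤ 1) :
    ∑ i ∈ s, f i ≤ (∑ i ∈ s, f i ^ p) ^ (1 / p) := by
  have key : (∑ i ∈ s, f i) ^ p ≤ ∑ i ∈ s, f i ^ p := by
    classical
    induction s using Finset.induction_on with
    | empty => simp [Real.zero_rpow hp0.ne']
    | insert a t hnot ih =>
      have hfa : 0 ≤ f a := hf a (Finset.mem_insert_self a t)
      have hft : ∀ i ∈ t, 0 ≤ f i := fun i hi => hf i (Finset.mem_insert_of_mem hi)
      have hsum : 0 ≤ ∑ i ∈ t, f i := Finset.sum_nonneg hft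
      rw [Finset.sum_insert hnot, Finset.sum_insert hnot]
      calc (f a + ∑ i ∈ t, f i) ^ p ≤ f a ^ p + (∑ i ∈ t, f i) ^ p := by
            have := NNReal.rpow_add_le_add_rpow ⟨f a, hfa⟩ ⟨∑ i ∈ t, f i, hsum⟩ hp0.le hp1
            have h2 := NNReal.coe_le_coe.2 this
            push_cast [NNReal.coe_rpow] at h2
            exact h2
        _ ≤ f a ^ p + ∑ i ∈ t, f i ^ p := by gcongr; exact ih hft
  have hs : 0 ≤ ∑ i ∈ s, f i := Finset.sum_nonneg hf
  calc ∑ i ∈ s, f i = ((∑ i ∈ s, f i) ^ p) ^ (1/p) := by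
        rw [← Real.rpow_mul hs, mul_one_div, div_self hp0.ne', Real.rpow_one]
    _ ≤ (∑ i ∈ s, f i ^ p) ^ (1/p) := Real.rpow_le_rpow (by positivity) key (by positivity)


private lemma bessel (n : ℕ) (w : (Fin n → Bool) → ℝ)
    (a : Fin n → ℝ)
    (ha : ∀ i, a i = ((2 : ℝ) ^ n)⁻¹ * ∑ s : Fin n → Bool, w s * (if s i then (1 : ℝ) else -1)) :
    ∑ i, a i ^ 2 ≤ ‖w‖ ^ 2 := by
  have h2n : (0:ℝ) < 2 ^ n := by positivity
  have hkey : ∀ i, ∑ s : Fin n → Bool, w s * (if s i then (1 : ℝ) else -1) = 2 ^ n * a i := by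
    intro i; rw [ha i]; field_simp
  -- S1 = ∑_s w s * g s
  have hS1 : ∑ s : Fin n → Bool, w s * ∑ i, a i * (if s i then (1 : ℝ) else -1)
      = 2 ^ n * ∑ i, a i ^ 2 := by
    simp only [Finset.mul_sum]
    rw [Finset.sum_comm]
    have : ∀ i : Fin n, ∑ s : Fin n → Bool, w s * (a i * (if s i then (1 : ℝ) else -1))
        = 2 ^ n * a i ^ 2 := by
      intro i
      have : ∑ s : Fin n → Bool, w s * (a i * (if s i then (1 : ℝ) else -1))
          = a i * ∑ s : Fin n → Bool, w s * (if s i then (1 : ℝ) else -1) := by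
        rw [Finset.mul_sum]; congr 1; funext s; ring
      rw [this, hkey i]; ring
    rw [Finset.sum_congr rfl (fun i _ => this i), ← Finset.mul_sum]
  have hS2 : ∑ s : Fin n → Bool, (∑ i, a i * (if s i then (1 : ℝ) else -1)) ^ 2
      = 2 ^ n * ∑ i, a i ^ 2 := by
    have hexp : ∀ s : Fin n → Bool, (∑ i, a i * (if s i then (1 : ℝ) else -1)) ^ 2
        = ∑ i, ∑ j, a i * a j *
            ((if s i then (1 : ℝ) else -1) * (if s j then (1 : ℝ) else -1)) := by
      intro s
      rw [sq, Finset.sum_mul_sum]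
      congr 1; funext i; congr 1; funext j; ring
    rw [Finset.sum_congr rfl (fun s _ => hexp s), Finset.sum_comm]
    have : ∀ i : Fin n, ∑ s : Fin n → Bool, ∑ j, a i * a j *
        ((if s i then (1 : ℝ) else -1) * (if s j then (1 : ℝ) else -1)) = 2 ^ n * a i ^ 2 := by
      intro i
      rw [Finset.sum_comm]
      have h1 : ∀ j : Fin n, ∑ s : Fin n → Bool, a i * a j *
          ((if s i then (1 : ℝ) else -1) * (if s j then (1 : ℝ) else -1))
          = a i * a j * (if i = j then (2:ℝ)^n else 0) := by
        intro j
        rw [← Finset.mul_sum, rad_orth n i j]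
      rw [Finset.sum_congr rfl (fun j _ => h1 j)]
      rw [Finset.sum_congr rfl (fun j _ => by rw [mul_ite, mul_zero])]
      rw [Finset.sum_ite_eq Finset.univ i (fun j => a i * a j * (2:ℝ)^n)]
      simp only [Finset.mem_univ, if_pos]
      ring
    rw [Finset.sum_congr rfl (fun i _ => this i), ← Finset.mul_sum]
  have hpos : (0:ℝ) ≤ ∑ s : Fin n → Bool,
      (w s - ∑ i, a i * (if s i then (1 : ℝ) else -1)) ^ 2 :=
    Finset.sum_nonneg fun s _ => sq_nonneg _
  have hexpand : ∑ s : Fin n → Bool,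
      (w s - ∑ i, a i * (if s i then (1 : ℝ) else -1)) ^ 2
      = (∑ s : Fin n → Bool, w s ^ 2) - 2 ^ n * ∑ i, a i ^ 2 := by
    have : ∀ s : Fin n → Bool,
        (w s - ∑ i, a i * (if s i then (1 : ℝ) else -1)) ^ 2
        = w s ^ 2 - 2 * (w s * ∑ i, a i * (if s i then (1 : ℝ) else -1))
          + (∑ i, a i * (if s i then (1 : ℝ) else -1)) ^ 2 := fun s => by ring
    rw [Finset.sum_congr rfl (fun s _ => this s), Finset.sum_add_distrib, Finset.sum_sub_distrib,
      ← Finset.mul_sum, hS1, hS2]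
    ring
  have hw2 : ∑ s : Fin n → Bool, w s ^ 2 ≤ 2 ^ n * ‖w‖ ^ 2 := by
    calc ∑ s : Fin n → Bool, w s ^ 2 ≤ ∑ _s : Fin n → Bool, ‖w‖ ^ 2 := by
          apply Finset.sum_le_sum
          intro s _
          have : |w s| ≤ ‖w‖ := by
            rw [← Real.norm_eq_abs]; exact norm_le_pi_norm w s
          calc w s ^ 2 = |w s| ^ 2 := (sq_abs _).symm
            _ ≤ ‖w‖ ^ 2 := by gcongr
      _ = 2 ^ n * ‖w‖ ^ 2 := by
          rw [Finset.sum_const, Finset.card_univ]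
          simp [Fintype.card_fun]
  have : 2 ^ n * ∑ i, a i ^ 2 ≤ 2 ^ n * ‖w‖ ^ 2 := by
    have := hexpand ▸ hpos
    linarith
  exact le_of_mul_le_mul_left this h2n

private lemma hoelder_step (p : ℝ) (hp0 : 0 < p) (hp1 : p < 1) (n : ℕ) (hn : 1 ≤ n)
    (w : ℝ) (hw : 0 ≤ w) (a : Fin n → ℝ) (hB : ∑ i, a i ^ 2 ≤ w ^ 2) :
    (∑ i, |a i| ^ p) ^ (1 / p) ≤ (n : ℝ) ^ (1 / p - 1 / 2) * w := by
  have hnpos : (0:ℝ) < n := by exact_mod_cast hn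
  have hq : (1:ℝ) ≤ 2 / p := by
    rw [le_div_iff₀ hp0]; linarith
  -- Hölder via arith_mean_le_rpow_mean
  have hH := Real.arith_mean_le_rpow_mean (s := Finset.univ) (fun _ : Fin n => (n:ℝ)⁻¹)
      (fun i => |a i| ^ p) (fun i _ => by positivity)
      (by rw [Finset.sum_const, Finset.card_univ, Fintype.card_fin, nsmul_eq_mul,
              mul_inv_cancel₀ hnpos.ne'])
      (fun i _ => by positivity) hq
  have hsimp : ∀ i : Fin n, (|a i| ^ p) ^ (2 / p) = a i ^ 2 := by
    intro i
    rw [← Real.rpow_mul (abs_nonneg _)]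
    have h2 : p * (2 / p) = 2 := by field_simp
    rw [h2, show (2:ℝ) = ((2:ℕ):ℝ) by norm_num, Real.rpow_natCast, sq_abs]
  simp only [hsimp] at hH
  rw [← Finset.mul_sum, ← Finset.mul_sum] at hH
  -- hH : n⁻¹ * ∑ |a i|^p ≤ (n⁻¹ * ∑ a i ^ 2) ^ (1/(2/p))
  have h12p : 1 / (2 / p) = p / 2 := by field_simp
  rw [h12p] at hH
  set S := ∑ i, |a i| ^ p with hS
  set Q := ∑ i, a i ^ 2 with hQ
  have hSnn : 0 ≤ S := Finset.sum_nonneg fun i _ => by positivity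
  have hQnn : 0 ≤ Q := Finset.sum_nonneg fun i _ => sq_nonneg _
  have hmono : S ≤ (n:ℝ) * ((n:ℝ)⁻¹ * Q) ^ (p / 2) := by
    have := mul_le_mul_of_nonneg_left hH hnpos.le
    rwa [← mul_assoc, mul_inv_cancel₀ hnpos.ne', one_mul] at this
  have hrw : (n:ℝ) * ((n:ℝ)⁻¹ * Q) ^ (p / 2)
      = (n:ℝ) * ((n:ℝ)⁻¹) ^ (p/2) * Q ^ (p/2) := by
    rw [Real.mul_rpow (by positivity) hQnn]; ring
  rw [hrw] at hmono
  -- now raise to 1/p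
  have hfin : S ^ (1/p) ≤ ((n:ℝ) * ((n:ℝ)⁻¹) ^ (p/2) * Q ^ (p/2)) ^ (1/p) :=
    Real.rpow_le_rpow hSnn hmono (by positivity)
  calc S ^ (1/p) ≤ ((n:ℝ) * ((n:ℝ)⁻¹) ^ (p/2) * Q ^ (p/2)) ^ (1/p) := hfin
    _ = (n:ℝ) ^ (1/p - 1/2) * Q ^ ((1:ℝ)/2) := by
        rw [Real.mul_rpow (by positivity) (by positivity),
            Real.mul_rpow (by positivity) (by positivity),
            ← Real.rpow_mul (by positivity : (0:ℝ) ≤ ((n:ℝ)⁻¹)),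
            ← Real.rpow_mul hQnn]
        have e1 : p / 2 * (1 / p) = 1 / 2 := by field_simp
        rw [e1, Real.inv_rpow hnpos.le, ← Real.rpow_neg hnpos.le,
            ← Real.rpow_add hnpos]
        ring_nf
    _ ≤ (n : ℝ) ^ (1 / p - 1 / 2) * w := by
        have hQw : Q ^ ((1:ℝ)/2) ≤ w := by
          calc Q ^ ((1:ℝ)/2) ≤ (w ^ 2) ^ ((1:ℝ)/2) := Real.rpow_le_rpow hQnn hB (by norm_num)
            _ = w := by
                rw [← Real.rpow_natCast w 2, ← Real.rpow_mul hw]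
                norm_num
        exact mul_le_mul_of_nonneg_left hQw (by positivity)

/-- The explicit factorization of the identity on `ℓ^n_p` through `ℓ^{2^n}_∞` via
Rademacher functions: with `(T x) s = ∑ i, x i * s i` and
`(P w) i = 2^{-n} ∑ s, w s * s i` (coordinates indexed by sign vectors
`s ∈ {-1,1}^n`, encoded as `Fin n → Bool`), one has `P ∘ T = Id`,
`‖T x‖_∞ ≤ ‖x‖_p` and `‖P w‖_p ≤ n^{1/p - 1/2} ‖w‖_∞`.
Here `(Fin n → Bool) → ℝ` carries the sup norm. -/
theorem rademacher_factorization (p : ℝ) (hp0 : 0 < p) (hp1 : p < 1)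
    (n : ℕ) (hn : 1 ≤ n) :
    (∀ x : Fin n → ℝ, ∀ i : Fin n,
        ((2 : ℝ) ^ n)⁻¹ * ∑ s : Fin n → Bool,
            (∑ j, x j * (if s j then (1 : ℝ) else -1)) *
              (if s i then (1 : ℝ) else -1) = x i) ∧
    (∀ x : Fin n → ℝ,
        ‖(fun s : Fin n → Bool => ∑ j, x j * (if s j then (1 : ℝ) else -1))‖ ≤
          (∑ i, |x i| ^ p) ^ (1 / p)) ∧
    (∀ w : (Fin n → Bool) → ℝ,
        (∑ i, |((2 : ℝ) ^ n)⁻¹ *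
              ∑ s : Fin n → Bool, w s * (if s i then (1 : ℝ) else -1)| ^ p) ^
            (1 / p) ≤
          (n : ℝ) ^ (1 / p - 1 / 2) * ‖w‖) := by
  refine ⟨?_, ?_, ?_⟩
  · -- P ∘ T = Id
    intro x i
    have h1 : ∑ s : Fin n → Bool,
        (∑ j, x j * (if s j then (1 : ℝ) else -1)) * (if s i then (1 : ℝ) else -1)
        = ∑ j, x j * ∑ s : Fin n → Bool,
            (if s j then (1 : ℝ) else -1) * (if s i then (1 : ℝ) else -1) := by
      simp only [Finset.sum_mul, Finset.mul_sum]
      rw [Finset.sum_comm]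
      congr 1; funext j; congr 1; funext s; ring
    rw [h1]
    simp only [rad_orth n]
    rw [Finset.sum_congr rfl (fun j _ => by rw [mul_ite, mul_zero])]
    rw [Finset.sum_ite_eq' Finset.univ i (fun j => x j * (2:ℝ)^n)]
    simp only [Finset.mem_univ, if_pos]
    have : (2:ℝ)^n ≠ 0 := by positivity
    field_simp
  · -- ‖T x‖_∞ ≤ ‖x‖_p
    intro x
    rw [pi_norm_le_iff_of_nonneg (by positivity)]
    intro s
    rw [Real.norm_eq_abs]
    calc |∑ j, x j * (if s j then (1 : ℝ) else -1)|
        ≤ ∑ j, |x j * (if s j then (1 : ℝ) else -1)| := Finset.abs_sum_le_sum_abs _ _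
      _ = ∑ j, |x j| := by
          apply Finset.sum_congr rfl; intro j _
          rw [abs_mul]; cases h : s j <;> simp [h]
      _ ≤ (∑ i, |x i| ^ p) ^ (1 / p) :=
          l1_le_lp Finset.univ (fun j => |x j|) (fun j _ => abs_nonneg _) hp0 hp1.le
  · -- ‖P w‖_p ≤ n^{1/p - 1/2} ‖w‖_∞
    intro w
    have hB := bessel n w
      (fun i => ((2 : ℝ) ^ n)⁻¹ * ∑ s : Fin n → Bool, w s * (if s i then (1 : ℝ) else -1))
      (fun i => rfl)
    exact hoelder_step p hp0 hp1 n hn ‖w‖ (norm_nonneg w)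
      (fun i => ((2 : ℝ) ^ n)⁻¹ * ∑ s : Fin n → Bool, w s * (if s i then (1 : ℝ) else -1)) hB
end
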